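/- Let G be a finite non-bipartite symmetric directed multigraph, let φ be a circulation on G, let η ≥ 1 be an integer, let λ be an η-labeling of φ, and let A_λ ⊆ ZMod η be its intersection set. Then for every ξ ∈ ZMod η whose canonical representative satisfies 1 ≤ ξ.val and 6·ξ.val ≤ η, there exists x ∈ A_λ such that η ≤ 3·(ξ·x).val and 3·(ξ·x).val ≤ 2·η (i.e., the representative of ξ·x lies in the interval [η/3, 2η/3]). -/

import Mathlib

/-- For a circulation on a finite non-bipartite symmetric directed
multigraph, with an `η`-labeling `lam` and intersection set `A`, every `ξ` with
`1 ≤ ξ.val` and `6 * ξ.val ≤ η` admits some `x ∈ A` with `ξ * x` represented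
in `[η/3, 2η/3]`. -/
theorem stmt_0 {V E : Type} [Fintype V] [Fintype E] [Nonempty V]
    (pred succ : E → V) (rev : E → E)
    (hrev : ∀ e, rev (rev e) = e)
    (hpredrev : ∀ e, pred (rev e) = succ e)
    (hsuccrev : ∀ e, succ (rev e) = pred e)
    (hrevloop : ∀ e, pred e = succ e → rev e = e)
    (hnonbip : ¬ ∃ c : V → Bool, ∀ e, c (pred e) ≠ c (succ e))
    (φ : Equiv.Perm E) (hφ : ∀ e, succ e = pred (φ e))
    (η : ℕ) (hη : 1 ≤ η)
    (lam : E → ZMod η) (hlam : ∀ e, lam (φ e) = lam e + 1)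
    (A : Set (ZMod η))
    (hA : A = {z : ZMod η | ∃ e₁ e₂, pred e₁ = pred e₂ ∧ z = lam e₁ - lam e₂}) :
    ∀ ξ : ZMod η, 1 ≤ ξ.val → 6 * ξ.val ≤ η →
      ∃ x ∈ A, η ≤ 3 * (ξ * x).val ∧ 3 * (ξ * x).val ≤ 2 * η := by
  intro ξ hξ1 hξ6
  by_contra hcon
  push_neg at hcon
  haveI : NeZero η := ⟨by omega⟩
  classical
  have hηpos : (0:ℤ) < (η:ℤ) := by exact_mod_cast hη
  -- uniqueness of small representatives
  have key : ∀ a b : ℤ, ((a : ZMod η) = (b : ZMod η)) → -(η:ℤ) < a - b → a - b < η → a = b := by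
    intro a b hab h1 h2
    have hmod : a ≡ b [ZMOD (η:ℕ)] := (ZMod.intCast_eq_intCast_iff _ _ _).mp hab
    obtain ⟨k, hk⟩ := Int.ModEq.dvd hmod
    have hk1 : k < 1 := by
      by_contra h
      push_neg at h
      nlinarith
    have hk2 : -1 < k := by
      by_contra h
      push_neg at h
      nlinarith
    have hk0 : k = 0 := by omega
    rw [hk0, mul_zero] at hk
    omega
  -- signed representative
  set sgn : ZMod η → ℤ := fun z => if 3 * z.val < η then (z.val : ℤ) else (z.val : ℤ) - η with hsgn
  have hcast : ∀ z : ZMod η, ((sgn z : ℤ) : ZMod η) = z := by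
    intro z
    simp only [hsgn]
    split <;> push_cast <;> simp [ZMod.natCast_val, ZMod.cast_id]
  have hbound : ∀ e₁ e₂ : E, pred e₁ = pred e₂ →
      (-(η:ℤ) < 3 * sgn (ξ * (lam e₁ - lam e₂)) ∧ 3 * sgn (ξ * (lam e₁ - lam e₂)) < η) := by
    intro e₁ e₂ h12
    have hxA : lam e₁ - lam e₂ ∈ A := by rw [hA]; exact ⟨e₁, e₂, h12, rfl⟩
    have hx := hcon _ hxA
    have hvlt : (ξ * (lam e₁ - lam e₂)).val < η := ZMod.val_lt _
    simp only [hsgn]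
    rcases lt_or_ge (3 * (ξ * (lam e₁ - lam e₂)).val) η with h | h
    · rw [if_pos h]; constructor <;> omega
    · rw [if_neg (not_lt.mpr h)]
      have h2 : 2 * η < 3 * (ξ * (lam e₁ - lam e₂)).val := hx (by omega)
      constructor <;> omega
  have hpred : ∀ e, pred (φ (rev e)) = pred e := fun e => by rw [← hφ, hsuccrev]
  set α : E → ℤ := fun e => sgn (ξ * (lam (φ (rev e)) - lam e)) with hα
  have hαb : ∀ e, -(η:ℤ) < 3 * α e ∧ 3 * α e < η := fun e => hbound _ _ (hpred e)
  have hαcast : ∀ e, ((α e : ℤ) : ZMod η) = ξ * (lam (rev e) + 1 - lam e) := by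
    intro e
    simp only [hα]
    rw [hcast, hlam]
  have hξcast : ((ξ.val : ℤ) : ZMod η) = ξ := by push_cast; simp [ZMod.natCast_val, ZMod.cast_id]
  -- pairing with reversal
  have hpair : ∀ e, α e + α (rev e) = 2 * (ξ.val : ℤ) := by
    intro e
    apply key
    · push_cast [hαcast]
      rw [hrev]
      have : ((ξ.val : ℤ) : ZMod η) = ξ := hξcast
      push_cast at this ⊢
      rw [this]
      ring
    · have h1 := hαb e; have h2 := hαb (rev e); omega
    · have h1 := hαb e; have h2 := hαb (rev e); omega
  -- fiberwise sums vanish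
  have hfiber : ∀ u : V, (∑ e ∈ Finset.univ.filter (fun e => pred e = u), α e) = 0 := by
    intro u
    set F := Finset.univ.filter (fun e => pred e = u) with hF
    have hmem : ∀ e, e ∈ F ↔ pred e = u := by intro e; simp [hF]
    rcases F.eq_empty_or_nonempty with hFe | ⟨e₀, he₀⟩
    · rw [hFe]; simp
    · have he₀u : pred e₀ = u := (hmem e₀).mp he₀
      set X : E → ℤ := fun f => sgn (ξ * (lam f - lam e₀)) with hX
      have hXb : ∀ f, pred f = u → (-(η:ℤ) < 3 * X f ∧ 3 * X f < η) := by
        intro f hf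
        exact hbound f e₀ (by rw [hf, he₀u])
      have hXcast : ∀ f, ((X f : ℤ) : ZMod η) = ξ * (lam f - lam e₀) := fun f => hcast _
      have hstep : ∀ e ∈ F, α e = X (φ (rev e)) - X e := by
        intro e he
        have hu : pred e = u := (hmem e).mp he
        apply key
        · push_cast [hαcast, hXcast, hlam]
          ring
        · have h1 := hαb e
          have h2 := hXb (φ (rev e)) (by rw [hpred]; exact hu)
          have h3 := hXb e hu
          omega
        · have h1 := hαb e
          have h2 := hXb (φ (rev e)) (by rw [hpred]; exact hu)
          have h3 := hXb e hu
          omega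
      have hσ : ∑ e ∈ F, X (φ (rev e)) = ∑ e ∈ F, X e := by
        apply Finset.sum_equiv ((Function.Involutive.toPerm rev hrev).trans φ)
        · intro e
          simp only [hmem, Equiv.trans_apply, Function.Involutive.coe_toPerm]
          show pred e = u ↔ pred (φ (rev e)) = u
          rw [hpred]
        · intro e _
          rfl
      calc (∑ e ∈ F, α e) = ∑ e ∈ F, (X (φ (rev e)) - X e) := Finset.sum_congr rfl hstep
        _ = (∑ e ∈ F, X (φ (rev e))) - ∑ e ∈ F, X e := Finset.sum_sub_distrib _ _
        _ = 0 := by rw [hσ, sub_self]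
  have htotal : (∑ e : E, α e) = 0 := by
    rw [← Finset.sum_fiberwise Finset.univ pred α]
    exact Finset.sum_eq_zero (fun u _ => hfiber u)
  have hrevsum : (∑ e : E, α (rev e)) = ∑ e : E, α e :=
    Equiv.sum_comp (Function.Involutive.toPerm rev hrev) α
  have hsum : (Fintype.card E : ℤ) * (2 * (ξ.val : ℤ)) = 0 := by
    have h1 : (∑ e : E, (α e + α (rev e))) = ∑ _e : E, (2 * (ξ.val:ℤ)) :=
      Finset.sum_congr rfl (fun e _ => hpair e)
    rw [Finset.sum_add_distrib, htotal, hrevsum, htotal, Finset.sum_const] at h1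
    simpa [mul_comm] using h1.symm
  have hcard : Fintype.card E = 0 := by
    rcases mul_eq_zero.mp hsum with h | h
    · exact_mod_cast h
    · exfalso; omega
  haveI : IsEmpty E := Fintype.card_eq_zero_iff.mp hcard
  exact hnonbip ⟨fun _ => true, fun e => (IsEmpty.false e).elim⟩
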